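/- For positive integers k, m, n and a composition [λ_1,...,λ_m] of n with partial sums a_i = λ_1+...+λ_i, Σ_{k_1+...+k_m=k} q^{a_1 k_2 + a_2 k_3 + ... + a_{m-1} k_m} Π_{i=1}^{m} [λ_i + k_i - 1 choose k_i]_q = [n + k - 1 choose k]_q, as an identity of polynomials in q, where the sum is over all m-tuples of nonnegative integers summing to k. -/

import Mathlib

/-- The `q`-shifted factorial `(q;q)_n = (1-q)(1-q²)⋯(1-qⁿ)` in `ℚ(q)`. -/
noncomputable def qShiftedFactorial (n : ℕ) : RatFunc ℚ :=
  ∏ j ∈ Finset.range n, (1 - RatFunc.X ^ (j + 1))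

/-- The Gaussian (q-)binomial coefficient. -/
noncomputable def gaussBinom (n k : ℕ) : RatFunc ℚ :=
  if k ≤ n then qShiftedFactorial n / (qShiftedFactorial k * qShiftedFactorial (n - k)) else 0

open Finset

lemma aux_qsf_ne_zero (n : ℕ) : qShiftedFactorial n ≠ 0 := by
  unfold qShiftedFactorial
  rw [Finset.prod_ne_zero_iff]
  intro j _ h
  have h1 : (RatFunc.X : RatFunc ℚ) ^ (j+1) = 1 := by
    linear_combination -h
  have h2 : (Polynomial.X : Polynomial ℚ) ^ (j+1) = 1 := by
    apply RatFunc.algebraMap_injective ℚ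
    rw [map_pow, map_one, RatFunc.algebraMap_X]
    exact h1
  have := congrArg (Polynomial.eval 0) h2
  simp [zero_pow] at this

lemma aux_qsf_succ (n : ℕ) : qShiftedFactorial (n+1) = qShiftedFactorial n * (1 - RatFunc.X ^ (n+1)) :=
  Finset.prod_range_succ _ _

lemma aux_pascal (n k : ℕ) :
    gaussBinom (n+1) (k+1) = gaussBinom n k + RatFunc.X ^ (k+1) * gaussBinom n (k+1) := by
  rcases le_or_gt (k+1) n with h | h
  · obtain ⟨d, rfl⟩ : ∃ d, n = k + 1 + d := ⟨n - (k+1), by omega⟩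
    rw [gaussBinom, gaussBinom, gaussBinom, if_pos (by omega), if_pos (by omega), if_pos (by omega)]
    have e1 : k + 1 + d + 1 - (k + 1) = d + 1 := by omega
    have e2 : k + 1 + d - k = d + 1 := by omega
    have e3 : k + 1 + d - (k + 1) = d := by omega
    rw [e1, e2, e3]
    rw [aux_qsf_succ (k+1+d), aux_qsf_succ k, aux_qsf_succ d]
    have hK := aux_qsf_ne_zero k
    have hD := aux_qsf_ne_zero d
    have hk1 : (1 - RatFunc.X ^ (k+1) : RatFunc ℚ) ≠ 0 := by
      have := aux_qsf_ne_zero (k+1)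
      rw [aux_qsf_succ] at this; exact right_ne_zero_of_mul this
    have hd1 : (1 - RatFunc.X ^ (d+1) : RatFunc ℚ) ≠ 0 := by
      have := aux_qsf_ne_zero (d+1)
      rw [aux_qsf_succ] at this; exact right_ne_zero_of_mul this
    field_simp
    ring
  · rcases Nat.lt_or_ge n (k+1) with _ | _
    · by_cases hkn : k = n
      · subst hkn
        rw [gaussBinom, gaussBinom, gaussBinom, if_pos le_rfl, if_pos le_rfl,
          if_neg (by omega)]
        simp only [Nat.sub_self]
        have h0 : qShiftedFactorial 0 = 1 := rfl
        rw [h0]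
        rw [mul_one, mul_one, div_self (aux_qsf_ne_zero (k+1)), div_self (aux_qsf_ne_zero k)]
        ring
      · rw [gaussBinom, gaussBinom, gaussBinom, if_neg (by omega), if_neg (by omega),
          if_neg (by omega)]
        ring
    · omega

/-- q-multichoose: `[c+k-1 choose k]_q`. -/
noncomputable def auxM (c k : ℕ) : RatFunc ℚ := gaussBinom (c + k - 1) k

lemma auxM_zero_right (c : ℕ) : auxM c 0 = 1 := by
  rw [auxM, gaussBinom, if_pos (Nat.zero_le _)]
  simp only [Nat.sub_zero]
  have h0 : qShiftedFactorial 0 = 1 := rfl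
  rw [h0, one_mul, div_self (aux_qsf_ne_zero _)]

lemma auxM_zero_left (k : ℕ) : auxM 0 (k+1) = 0 := by
  rw [auxM, gaussBinom, if_neg (by omega)]

lemma auxM_one_left (k : ℕ) : auxM 1 k = 1 := by
  rw [auxM, gaussBinom, if_pos (by omega)]
  have e : 1 + k - 1 = k := by omega
  rw [e, Nat.sub_self]
  have h0 : qShiftedFactorial 0 = 1 := rfl
  rw [h0, mul_one, div_self (aux_qsf_ne_zero _)]

lemma auxM_rec (c k : ℕ) :
    auxM (c+1) (k+1) = auxM (c+1) k + RatFunc.X ^ (k+1) * auxM c (k+1) := by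
  have e1 : c + 1 + (k + 1) - 1 = (c + k) + 1 := by omega
  have e2 : c + 1 + k - 1 = c + k := by omega
  have e3 : c + (k + 1) - 1 = c + k := by omega
  rw [auxM, auxM, auxM, e1, e2, e3, aux_pascal]

lemma auxM_sumrec (c k : ℕ) :
    auxM (c+1) k = ∑ j ∈ Finset.range (k+1), RatFunc.X ^ j * auxM c j := by
  induction k with
  | zero => simp [auxM_zero_right]
  | succ k ih => rw [Finset.sum_range_succ, ← ih, auxM_rec]

lemma aux_triA (f : ℕ → ℕ → RatFunc ℚ) (k : ℕ) :
    ∑ i ∈ Finset.range (k+1), ∑ t ∈ Finset.range (i+1), f t (k-i)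
      = ∑ t ∈ Finset.range (k+1), ∑ j ∈ Finset.range (k-t+1), f t j := by
  rw [← Finset.sum_range_reflect]
  have e : ∀ j ∈ Finset.range (k+1),
      ∑ t ∈ Finset.range (k + 1 - 1 - j + 1), f t (k - (k + 1 - 1 - j))
        = ∑ t ∈ Finset.range (k - j + 1), f t j := by
    intro j hj
    rw [Finset.mem_range] at hj
    have e1 : k + 1 - 1 - j = k - j := by omega
    have e2 : k - (k - j) = j := by omega
    rw [e1, e2]
  rw [Finset.sum_congr rfl e]
  exact Finset.sum_comm' (by intro x y; simp only [Finset.mem_range]; omega)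

lemma aux_triB (f : ℕ → ℕ → RatFunc ℚ) (k : ℕ) :
    ∑ s ∈ Finset.range (k+1), ∑ t ∈ Finset.range (s+1), f t (s-t)
      = ∑ t ∈ Finset.range (k+1), ∑ j ∈ Finset.range (k-t+1), f t j := by
  have h1 : ∑ s ∈ Finset.range (k+1), ∑ t ∈ Finset.range (s+1), f t (s-t)
      = ∑ t ∈ Finset.range (k+1), ∑ s ∈ Finset.Ico t (k+1), f t (s-t) := by
    exact Finset.sum_comm' (by intro x y; simp only [Finset.mem_range, Finset.mem_Ico]; omega)
  rw [h1]
  refine Finset.sum_congr rfl fun t ht => ?_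
  rw [Finset.sum_Ico_eq_sum_range]
  have e : k + 1 - t = k - t + 1 := by
    rw [Finset.mem_range] at ht; omega
  rw [e]
  exact Finset.sum_congr rfl fun j _ => by rw [Nat.add_sub_cancel_left]

lemma aux_vander (a b k : ℕ) :
    ∑ p ∈ Finset.HasAntidiagonal.antidiagonal k, RatFunc.X ^ (a * p.2) * auxM a p.1 * auxM b p.2
      = auxM (a + b) k := by
  induction a generalizing k with
  | zero =>
    rw [Finset.sum_eq_single (0, k)]
    · simp [auxM_zero_right]
    · rintro ⟨p1, p2⟩ hp hne
      rw [Finset.HasAntidiagonal.mem_antidiagonal] at hp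
      cases p1 with
      | zero => exact absurd (by simp [← hp]) hne
      | succ p1 => simp [auxM_zero_left]
    · intro h
      exact absurd (by simp [Finset.HasAntidiagonal.mem_antidiagonal]) h
  | succ a ih =>
    have hLHS : ∑ p ∈ Finset.HasAntidiagonal.antidiagonal k,
        RatFunc.X ^ ((a+1) * p.2) * auxM (a+1) p.1 * auxM b p.2
        = ∑ i ∈ Finset.range (k+1), ∑ t ∈ Finset.range (i+1),
            (fun t j => RatFunc.X ^ ((a+1) * j) * (RatFunc.X ^ t * auxM a t) * auxM b j) t (k-i) := by
      rw [Finset.Nat.sum_antidiagonal_eq_sum_range_succ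
        (f := fun i j => RatFunc.X ^ ((a+1) * j) * auxM (a+1) i * auxM b j)]
      refine Finset.sum_congr rfl fun i _ => ?_
      rw [auxM_sumrec, Finset.mul_sum, Finset.sum_mul]
    have hRHS : auxM (a + 1 + b) k
        = ∑ s ∈ Finset.range (k+1), ∑ t ∈ Finset.range (s+1),
            (fun t j => RatFunc.X ^ ((a+1) * j) * (RatFunc.X ^ t * auxM a t) * auxM b j) t (s-t) := by
      have e : a + 1 + b = (a + b) + 1 := by omega
      rw [e, auxM_sumrec]
      refine Finset.sum_congr rfl fun s hs => ?_
      rw [← ih s, Finset.mul_sum,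
        Finset.Nat.sum_antidiagonal_eq_sum_range_succ
          (f := fun t j => RatFunc.X ^ s * (RatFunc.X ^ (a * j) * auxM a t * auxM b j))]
      refine Finset.sum_congr rfl fun t ht => ?_
      rw [Finset.mem_range] at ht
      have epow : (RatFunc.X : RatFunc ℚ) ^ s * RatFunc.X ^ (a * (s - t))
          = RatFunc.X ^ ((a+1) * (s - t)) * RatFunc.X ^ t := by
        rw [← pow_add, ← pow_add]
        congr 1
        have : t ≤ s := by omega
        obtain ⟨u, rfl⟩ := Nat.exists_eq_add_of_le this
        rw [Nat.add_sub_cancel_left]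
        ring
      calc RatFunc.X ^ s * (RatFunc.X ^ (a * (s - t)) * auxM a t * auxM b (s - t))
          = (RatFunc.X ^ s * RatFunc.X ^ (a * (s - t))) * auxM a t * auxM b (s - t) := by ring
        _ = RatFunc.X ^ ((a+1) * (s-t)) * (RatFunc.X ^ t * auxM a t) * auxM b (s-t) := by
            rw [epow]; ring
    rw [hLHS, hRHS]
    exact (aux_triA (fun t j => RatFunc.X ^ ((a+1) * j) * (RatFunc.X ^ t * auxM a t) * auxM b j)
      k).trans (aux_triB _ k).symm

lemma aux_tuple_split (m k : ℕ) (g : (Fin (m+1) → ℕ) → RatFunc ℚ) :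
    ∑ kf ∈ Finset.Nat.antidiagonalTuple (m+1) k, g kf
      = ∑ p ∈ Finset.HasAntidiagonal.antidiagonal k, ∑ t ∈ Finset.Nat.antidiagonalTuple m p.2,
          g (Fin.cons (α := fun _ => ℕ) p.1 t) := by
  rw [Finset.sum_sigma' (Finset.HasAntidiagonal.antidiagonal k)
    (fun p => Finset.Nat.antidiagonalTuple m p.2) (fun p t => g (Fin.cons (α := fun _ => ℕ) p.1 t))]
  apply Finset.sum_nbij' (i := fun kf => (⟨(kf 0, ∑ i : Fin m, kf i.succ), fun i => kf i.succ⟩ :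
      Σ p : ℕ × ℕ, Fin m → ℕ)) (j := fun x => Fin.cons x.1.1 x.2)
  · intro kf hkf
    rw [Finset.Nat.mem_antidiagonalTuple] at hkf
    rw [Finset.mem_sigma, Finset.HasAntidiagonal.mem_antidiagonal, Finset.Nat.mem_antidiagonalTuple]
    refine ⟨?_, rfl⟩
    rw [← hkf, Fin.sum_univ_succ]
  · rintro ⟨⟨p1, p2⟩, t⟩ hx
    rw [Finset.mem_sigma, Finset.HasAntidiagonal.mem_antidiagonal, Finset.Nat.mem_antidiagonalTuple] at hx
    rw [Finset.Nat.mem_antidiagonalTuple, Fin.sum_univ_succ]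
    simp only [Fin.cons_zero, Fin.cons_succ]
    rw [hx.2, hx.1]
  · intro kf _
    exact Fin.cons_self_tail kf
  · rintro ⟨⟨p1, p2⟩, t⟩ hx
    rw [Finset.mem_sigma, Finset.HasAntidiagonal.mem_antidiagonal, Finset.Nat.mem_antidiagonalTuple] at hx
    simp only [Fin.cons_zero, Fin.cons_succ]
    have : (∑ i : Fin m, t i) = p2 := hx.2
    simp [this]
  · intro kf _
    exact congrArg g (Fin.cons_self_tail kf).symm

lemma aux_T (m : ℕ) (lam : ℕ → ℕ) (k : ℕ) :
    ∑ kf ∈ Finset.Nat.antidiagonalTuple m k,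
        RatFunc.X ^ (∑ i : Fin m, (∑ t ∈ Finset.range (i:ℕ), lam t) * kf i) *
          ∏ i : Fin m, auxM (lam i) (kf i)
      = auxM (∑ i ∈ Finset.range m, lam i) k := by
  induction m generalizing lam k with
  | zero =>
    cases k with
    | zero => simp [Finset.Nat.antidiagonalTuple_zero_zero, auxM_zero_right]
    | succ k => simp [Finset.Nat.antidiagonalTuple_zero_succ, auxM_zero_left]
  | succ m ih =>
    rw [aux_tuple_split]
    have hinner : ∀ p ∈ Finset.HasAntidiagonal.antidiagonal k,
        (∑ t ∈ Finset.Nat.antidiagonalTuple m p.2,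
          RatFunc.X ^ (∑ i : Fin (m+1), (∑ u ∈ Finset.range (i:ℕ), lam u) * (Fin.cons (α := fun _ => ℕ) p.1 t) i) *
            ∏ i : Fin (m+1), auxM (lam i) ((Fin.cons (α := fun _ => ℕ) p.1 t) i))
        = RatFunc.X ^ (lam 0 * p.2) * auxM (lam 0) p.1
            * auxM (∑ i ∈ Finset.range m, lam (i+1)) p.2 := by
      intro p hp
      rw [← ih (fun i => lam (i+1)) p.2, Finset.mul_sum]
      refine Finset.sum_congr rfl fun t ht => ?_
      rw [Finset.Nat.mem_antidiagonalTuple] at ht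
      have hexp : (∑ i : Fin (m+1), (∑ u ∈ Finset.range (i:ℕ), lam u) * (Fin.cons (α := fun _ => ℕ) p.1 t) i)
          = lam 0 * p.2 + ∑ i : Fin m, (∑ u ∈ Finset.range (i:ℕ), lam (u+1)) * t i := by
        rw [Fin.sum_univ_succ]
        simp only [Fin.cons_zero, Fin.cons_succ, Fin.val_zero, Fin.val_succ]
        rw [Finset.range_zero, Finset.sum_empty, zero_mul, zero_add]
        have : ∀ i : Fin m, (∑ u ∈ Finset.range ((i:ℕ)+1), lam u) * t i
            = lam 0 * t i + (∑ u ∈ Finset.range (i:ℕ), lam (u+1)) * t i := by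
          intro i
          rw [Finset.sum_range_succ' lam, add_mul]
          ring
        rw [Finset.sum_congr rfl fun i _ => this i, Finset.sum_add_distrib,
          ← Finset.mul_sum, ht]
      have hprod : (∏ i : Fin (m+1), auxM (lam i) ((Fin.cons (α := fun _ => ℕ) p.1 t) i))
          = auxM (lam 0) p.1 * ∏ i : Fin m, auxM (lam (i+1)) (t i) := by
        rw [Fin.prod_univ_succ]
        simp [Fin.cons_zero, Fin.cons_succ]
      rw [hexp, hprod, pow_add]
      ring
    rw [Finset.sum_congr rfl hinner]
    rw [Finset.sum_range_succ' lam m, add_comm (∑ i ∈ Finset.range m, lam (i+1)) (lam 0)]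
    exact aux_vander (lam 0) _ k

/-- Corollary 4.2: for a composition `[λ₁,…,λ_m]` of `n` with partial sums `a`,
`∑_{k₁+⋯+k_m=k} q^{a₁k₂+⋯+a_{m-1}k_m} ∏ᵢ [λᵢ+kᵢ-1 choose kᵢ]_q = [n+k-1 choose k]_q`.
With 0-indexing, the exponent is `∑ᵢ (λ₀+⋯+λ_{i-1})·kᵢ`. -/
theorem generalized_q_vandermonde_multichoose (k m n : ℕ) (hk : 0 < k) (hm : 0 < m) (hn : 0 < n)
    (lam : ℕ → ℕ) (hpos : ∀ i < m, 0 < lam i)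
    (hsum : ∑ i ∈ Finset.range m, lam i = n) :
    ∑ kf ∈ Finset.Nat.antidiagonalTuple m k,
        RatFunc.X ^ (∑ i : Fin m, (∑ t ∈ Finset.range (i : ℕ), lam t) * kf i) *
          ∏ i : Fin m, gaussBinom (lam i + kf i - 1) (kf i) =
      gaussBinom (n + k - 1) k := by
  subst hsum
  exact aux_T m lam k
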